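/- If L is a regular language, then the language bdi(L) obtained by perfect-shuffling the first half of each word with its last half is regular. -/
import Mathlib


/-- The perfect shuffle of two words: `pshuffle x y` alternates letters starting
with `x`, i.e. `x₁ y₁ x₂ y₂ ⋯` (when `|y| = |x| + 1` the extra letter of `y`
comes last). -/
def pshuffle {α : Type*} : List α → List α → List α
  | [], ys => ys
  | a :: xs, ys => a :: pshuffle ys xs
termination_by x y => x.length + y.length
decreasing_by simp [Nat.lt_succ_iff]; omega

/-- The inverse-decimation of a word: the perfect shuffle of its first half
with its last half (the last half getting the extra letter for odd lengths). -/
def bdi {α : Type*} (w : List α) : List α :=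
  pshuffle (w.take (w.length / 2)) (w.drop (w.length / 2))

theorem pshuffle_nil {α : Type*} (x : List α) : pshuffle x [] = x := by
  cases x <;> simp [pshuffle]

theorem pshuffle_length {α : Type*} (x y : List α) :
    (pshuffle x y).length = x.length + y.length := by
  induction x, y using pshuffle.induct with
  | case1 ys => simp [pshuffle]
  | case2 a xs ys ih => simp [pshuffle, ih]; omega

theorem pshuffle_snoc {α : Type*} : ∀ n (x y : List α) (c : α), x.length + y.length ≤ n →
    (x.length ≤ y.length + 1 → pshuffle x (y ++ [c]) = pshuffle x y ++ [c]) ∧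
    (y.length ≤ x.length → pshuffle (x ++ [c]) y = pshuffle x y ++ [c]) := by
  intro n
  induction n with
  | zero =>
    intro x y c h
    have hx : x = [] := by cases x <;> simp_all
    have hy : y = [] := by cases y <;> simp_all
    subst hx; subst hy
    simp [pshuffle]
  | succ n ih =>
    intro x y c h
    constructor
    · intro hlen
      match x with
      | [] => simp [pshuffle]
      | a :: x' =>
        have key := (ih y x' c (by simp at h ⊢; omega)).2 (by simp at hlen; omega)
        simp [pshuffle, key]
    · intro hlen
      match x with
      | [] =>
        have hy : y = [] := by cases y <;> simp_all
        subst hy; simp [pshuffle]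
      | a :: x' =>
        have key := (ih y x' c (by simp at h ⊢; omega)).1 (by simp at hlen ⊢; omega)
        simp [pshuffle, key]

theorem pshuffle_snoc_right {α : Type*} (x y : List α) (c : α) (h : x.length ≤ y.length + 1) :
    pshuffle x (y ++ [c]) = pshuffle x y ++ [c] :=
  (pshuffle_snoc (x.length + y.length) x y c le_rfl).1 h

theorem pshuffle_snoc_left {α : Type*} (x y : List α) (c : α) (h : y.length ≤ x.length) :
    pshuffle (x ++ [c]) y = pshuffle x y ++ [c] :=
  (pshuffle_snoc (x.length + y.length) x y c le_rfl).2 h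

/-- NFA recognizing bdi(L): guess the midpoint state `q`, run the first-half
simulation on even positions and the second-half simulation (from `q`) on the
others.  Mode 0: next letter is first-half's; mode 1: next is second-half's;
mode 2: the extra trailing second-half letter has been consumed. -/
def bdiNFA {α σ : Type*} (M : DFA α σ) : NFA α (σ × σ × σ × Fin 3) where
  step := fun s a =>
    if s.2.2.2 = 0 then
      {(s.1, M.step s.2.1 a, s.2.2.1, 1), (s.1, s.2.1, M.step s.2.2.1 a, 2)}
    else if s.2.2.2 = 1 then
      {(s.1, s.2.1, M.step s.2.2.1 a, 0)}
    else ∅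
  start := {s | s.2.1 = M.start ∧ s.2.2.1 = s.1 ∧ s.2.2.2 = 0}
  accept := {s | s.2.1 = s.1 ∧ s.2.2.1 ∈ M.accept ∧ (s.2.2.2 = 0 ∨ s.2.2.2 = 2)}

theorem bdiNFA_sound {α σ : Type*} (M : DFA α σ) :
    ∀ (z : List α) (q p r : σ) (m : Fin 3), (q, p, r, m) ∈ (bdiNFA M).eval z →
      ∃ u v : List α, z = pshuffle u v ∧ p = M.evalFrom M.start u ∧ r = M.evalFrom q v ∧
        ((m = 0 ∧ u.length = v.length) ∨ (m = 1 ∧ u.length = v.length + 1) ∨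
         (m = 2 ∧ v.length = u.length + 1)) := by
  intro z
  induction z using List.reverseRecOn with
  | nil =>
    intro q p r m hm
    obtain ⟨h1, h2, h3⟩ : p = M.start ∧ r = q ∧ m = 0 := hm
    exact ⟨[], [], by simp [pshuffle], by simp [h1], by simp [h2], Or.inl ⟨h3, rfl⟩⟩
  | append_singleton z a ih =>
    intro q p r m hm
    rw [NFA.eval_append_singleton, NFA.mem_stepSet] at hm
    obtain ⟨⟨q', p', r', m'⟩, ht, hstep⟩ := hm
    simp only [bdiNFA] at hstep
    split_ifs at hstep with h0 h1
    · -- m' = 0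
      obtain ⟨u, v, hz, hp, hr, hcase⟩ := ih q' p' r' m' ht
      have hlen : u.length = v.length := by
        rcases hcase with ⟨_, h⟩ | ⟨hm', _⟩ | ⟨hm', _⟩ <;> simp_all
      rcases hstep with heq | heq
      · -- took a first-half letter
        obtain ⟨e1, e2, e3, e4⟩ : q = q' ∧ p = M.step p' a ∧ r = r' ∧ m = 1 := by
          simpa [Prod.ext_iff] using heq
        refine ⟨u ++ [a], v, ?_, ?_, ?_, Or.inr (Or.inl ⟨e4, by simp [hlen]⟩)⟩
        · rw [hz, pshuffle_snoc_left u v a (by omega)]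
        · simp [e2, hp]
        · simp [e3, e1, hr]
      · -- took the extra trailing second-half letter
        obtain ⟨e1, e2, e3, e4⟩ : q = q' ∧ p = p' ∧ r = M.step r' a ∧ m = 2 := by
          simpa [Prod.ext_iff] using heq
        refine ⟨u, v ++ [a], ?_, ?_, ?_, Or.inr (Or.inr ⟨e4, by simp [hlen]⟩)⟩
        · rw [hz, pshuffle_snoc_right u v a (by omega)]
        · simp [e2, hp]
        · simp [e3, e1, hr]
    · -- m' = 1 : took a second-half letter
      obtain ⟨u, v, hz, hp, hr, hcase⟩ := ih q' p' r' m' ht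
      have hlen : u.length = v.length + 1 := by
        rcases hcase with ⟨hm', _⟩ | ⟨_, h⟩ | ⟨hm', _⟩ <;> simp_all
      obtain ⟨e1, e2, e3, e4⟩ : q = q' ∧ p = p' ∧ r = M.step r' a ∧ m = 0 := by
        simpa [Prod.ext_iff] using hstep
      refine ⟨u, v ++ [a], ?_, ?_, ?_, Or.inl ⟨e4, by simp [hlen]⟩⟩
      · rw [hz, pshuffle_snoc_right u v a (by omega)]
      · simp [e2, hp]
      · simp [e3, e1, hr]
    · exact absurd hstep (by simp)

theorem bdiNFA_complete {α σ : Type*} (M : DFA α σ) :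
    ∀ n (u v : List α) (q : σ), u.length + v.length ≤ n →
      (u.length = v.length →
        (q, M.evalFrom M.start u, M.evalFrom q v, (0 : Fin 3)) ∈ (bdiNFA M).eval (pshuffle u v)) ∧
      (u.length = v.length + 1 →
        (q, M.evalFrom M.start u, M.evalFrom q v, (1 : Fin 3)) ∈ (bdiNFA M).eval (pshuffle u v)) ∧
      (v.length = u.length + 1 →
        (q, M.evalFrom M.start u, M.evalFrom q v, (2 : Fin 3)) ∈ (bdiNFA M).eval (pshuffle u v)) := by
  intro n
  induction n with
  | zero =>
    intro u v q h
    have hu : u = [] := by cases u <;> simp_all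
    have hv : v = [] := by cases v <;> simp_all
    subst hu; subst hv
    refine ⟨fun _ => ?_, fun h => by simp at h, fun h => by simp at h⟩
    simp only [pshuffle, NFA.eval_nil]
    exact ⟨rfl, rfl, rfl⟩
  | succ n ih =>
    intro u v q h
    refine ⟨?_, ?_, ?_⟩
    · -- mode 0: last letter was v's (unless both empty)
      intro hlen
      rcases v.eq_nil_or_concat' with rfl | ⟨v', a, rfl⟩
      · have hu : u = [] := by simp_all
        subst hu
        simp only [pshuffle, NFA.eval_nil]
        exact ⟨rfl, rfl, rfl⟩
      · have prev := (ih u v' q (by simp at h ⊢; omega)).2.1 (by simp at hlen; omega)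
        rw [pshuffle_snoc_right u v' a (by simp at hlen; omega)]
        rw [NFA.eval_append_singleton, NFA.mem_stepSet]
        refine ⟨_, prev, ?_⟩
        simp only [bdiNFA]
        norm_num
    · -- mode 1: last letter was u's
      intro hlen
      rcases u.eq_nil_or_concat' with rfl | ⟨u', a, rfl⟩
      · simp at hlen
      · have prev := (ih u' v q (by simp at h ⊢; omega)).1 (by simp at hlen; omega)
        rw [pshuffle_snoc_left u' v a (by simp at hlen; omega)]
        rw [NFA.eval_append_singleton, NFA.mem_stepSet]
        refine ⟨_, prev, ?_⟩
        simp only [bdiNFA]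
        norm_num
    · -- mode 2: last letter was v's extra one
      intro hlen
      rcases v.eq_nil_or_concat' with rfl | ⟨v', a, rfl⟩
      · simp at hlen
      · have prev := (ih u v' q (by simp at h ⊢; omega)).1 (by simp at hlen; omega)
        rw [pshuffle_snoc_right u v' a (by simp at hlen; omega)]
        rw [NFA.eval_append_singleton, NFA.mem_stepSet]
        refine ⟨_, prev, ?_⟩
        simp only [bdiNFA]
        norm_num

/-- If L is regular, then so is bdi(L) = {bdi w : w ∈ L}. -/
theorem bdi_regular {α : Type*} (L : Language α) (h : L.IsRegular) :
    Language.IsRegular {z | ∃ w ∈ L, z = bdi w} := by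
  obtain ⟨σ, instF, M, hM⟩ := h
  refine ⟨Set (σ × σ × σ × Fin 3), Fintype.ofFinite _, (bdiNFA M).toDFA, ?_⟩
  rw [NFA.toDFA_correct]
  ext z
  constructor
  · rintro ⟨⟨q, p, r, m⟩, ⟨hpq, hacc, hm⟩, hev⟩
    dsimp only at hpq hacc hm
    obtain ⟨u, v, hz, hp, hr, hcase⟩ := bdiNFA_sound M z q p r m hev
    have hlen : u.length = v.length ∨ v.length = u.length + 1 := by
      rcases hcase with ⟨hm', hl⟩ | ⟨hm', hl⟩ | ⟨hm', hl⟩ <;> subst hm' <;>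
        first
        | exact Or.inl hl
        | exact Or.inr hl
        | (exfalso; rcases hm with hm | hm <;> simp at hm)
    refine ⟨u ++ v, ?_, ?_⟩
    · rw [← hM]
      show M.evalFrom M.start (u ++ v) ∈ M.accept
      rw [M.evalFrom_of_append, ← hp, hpq, ← hr]
      exact hacc
    · have hlen2 : (u ++ v).length / 2 = u.length := by
        simp only [List.length_append]; omega
      rw [bdi, hlen2, List.take_left, List.drop_left, hz]
  · rintro ⟨w, hw, rfl⟩
    set u := w.take (w.length / 2) with hu
    set v := w.drop (w.length / 2) with hv
    have huv : u ++ v = w := List.take_append_drop _ _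
    have hul : u.length = w.length / 2 := by simp [hu]; omega
    have hvl : v.length = w.length - w.length / 2 := by simp [hv]
    have hacc : M.evalFrom M.start w ∈ M.accept := by
      have : w ∈ M.accepts := by rw [hM]; exact hw
      exact (DFA.mem_accepts M).mp this
    set q := M.evalFrom M.start u with hq
    have hr : M.evalFrom q v = M.evalFrom M.start w := by
      rw [hq, ← M.evalFrom_of_append, huv]
    rcases Nat.even_or_odd w.length with he | ho
    · have hlen : u.length = v.length := by
        obtain ⟨k, hk⟩ := he; omega
      have := (bdiNFA_complete M (u.length + v.length) u v q le_rfl).1 hlen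
      exact ⟨(q, M.evalFrom M.start u, M.evalFrom q v, 0), ⟨rfl, hr ▸ hacc, Or.inl rfl⟩, this⟩
    · have hlen : v.length = u.length + 1 := by
        obtain ⟨k, hk⟩ := ho; omega
      have := (bdiNFA_complete M (u.length + v.length) u v q le_rfl).2.2 hlen
      exact ⟨(q, M.evalFrom M.start u, M.evalFrom q v, 2), ⟨rfl, hr ▸ hacc, Or.inr rfl⟩, this⟩
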